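/- Let b ≥ 2 and m > b − 1, and let γ = √(1 + 4(b−1)/(1+m−b)), α = ((1+m−b)/2)·(1 + γ), β = (γ − 1)/(γ + 1). Then α + β ≤ m, equivalently 1 − (1+m−b)/(α+β) ≤ (b−1)/m, with equality if and only if b = 2. -/

import Mathlib

/-- with `b ≥ 2`, `m > b − 1`, `γ = √(1 + 4(b−1)/(1+m−b))`,
`α = ((1+m−b)/2)(1 + γ)`, `β = (γ − 1)/(γ + 1)`, one has `α + β ≤ m`, equivalently
`1 − (1+m−b)/(α+β) ≤ (b−1)/m`, with equality if and only if `b = 2`. -/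
theorem stmt13 (b m γ α β : ℝ) (hb : 2 ≤ b) (hm : b - 1 < m)
    (hγ : γ = Real.sqrt (1 + 4 * (b - 1) / (1 + m - b)))
    (hα : α = (1 + m - b) / 2 * (1 + γ))
    (hβ : β = (γ - 1) / (γ + 1)) :
    α + β ≤ m ∧
    1 - (1 + m - b) / (α + β) ≤ (b - 1) / m ∧
    (α + β = m ↔ b = 2) ∧
    (1 - (1 + m - b) / (α + β) = (b - 1) / m ↔ b = 2) := by
  have hs : 0 < 1 + m - b := by linarith
  have harg : (0:ℝ) ≤ 1 + 4 * (b - 1) / (1 + m - b) := by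
    have : (0:ℝ) ≤ 4 * (b - 1) / (1 + m - b) := div_nonneg (by linarith) (by linarith)
    linarith
  have hγnn : 0 ≤ γ := hγ ▸ Real.sqrt_nonneg _
  have hγsq : γ ^ 2 = 1 + 4 * (b - 1) / (1 + m - b) := by
    rw [hγ, Real.sq_sqrt harg]
  have hγsq' : γ ^ 2 * (1 + m - b) = (1 + m - b) + 4 * (b - 1) := by
    field_simp at hγsq; linarith
  have hargone : 1 < 1 + 4 * (b - 1) / (1 + m - b) := by
    have : 0 < 4 * (b - 1) / (1 + m - b) := div_pos (by linarith) hs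
    linarith
  have hγ1 : 1 < γ := by nlinarith [hγsq]
  have hγp1 : (0:ℝ) < γ + 1 := by linarith
  have hmpos : (0:ℝ) < m := by linarith
  have key : α + β = m - (b - 2) * (γ - 1) / (γ + 1) := by
    rw [hα, hβ]
    field_simp
    nlinarith [hγsq']
  have hβpos : 0 < (γ - 1) / (γ + 1) := div_pos (by linarith) hγp1
  have hab : 0 < α + β := by
    have hαpos : 0 < α := by
      rw [hα]; exact mul_pos (by linarith) (by linarith)
    rw [hβ] at *; linarith
  have h1 : α + β ≤ m := by
    rw [key]
    have : 0 ≤ (b - 2) * (γ - 1) / (γ + 1) :=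
      div_nonneg (mul_nonneg (by linarith) (by linarith)) (by linarith)
    linarith
  have heq : (b - 1) / m = 1 - (1 + m - b) / m := by
    field_simp; ring
  have h2 : 1 - (1 + m - b) / (α + β) ≤ (b - 1) / m := by
    rw [heq]
    have : (1 + m - b) / m ≤ (1 + m - b) / (α + β) :=
      div_le_div_of_nonneg_left (le_of_lt hs) hab h1
    linarith
  have h3 : (α + β = m ↔ b = 2) := by
    constructor
    · intro h
      rw [key] at h
      have h0 : (b - 2) * (γ - 1) / (γ + 1) = 0 := by linarith
      have : (b - 2) * (γ - 1) = 0 := by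
        field_simp at h0; linarith
      rcases mul_eq_zero.mp this with h' | h'
      · linarith
      · linarith
    · intro h
      rw [key, h]; ring
  refine ⟨h1, h2, h3, ?_⟩
  constructor
  · intro h
    rw [heq] at h
    have hdiv : (1 + m - b) / (α + β) = (1 + m - b) / m := by linarith
    have h' := (div_eq_div_iff (ne_of_gt hab) (ne_of_gt hmpos)).mp hdiv
    have : m = α + β := mul_left_cancel₀ (ne_of_gt hs) h'
    exact h3.mp this.symm
  · intro h
    have := h3.mpr h
    rw [this, heq]
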